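/- Let H be an n-uniform hypergraph in which every ordering of the vertices separates at most one simple pair. If (X, Y) and (X', Y) are simple pairs of edges of H with X ≠ X', then X ∩ Y ≠ X' ∩ Y. -/

import Mathlib

open Classical

/-- `π` separates the simple pair `(X, Y)`: with `X ∩ Y = {y}`, all of `X \ {y}`
precedes `y` and `y` precedes all of `Y \ {y}` in the ordering `π`. -/
def Separates {V : Type*} [Fintype V] [DecidableEq V] (π : V ≃ Fin (Fintype.card V))
    (X Y : Finset V) : Prop :=
  ∃ y, X ∩ Y = {y} ∧ (∀ x ∈ X, x ≠ y → π x < π y) ∧ (∀ z ∈ Y, z ≠ y → π y < π z)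

/-- A hypergraph with edge set `E` is 2-colorable if some 2-coloring of the vertices
leaves no edge monochromatic. -/
def TwoColorable {V : Type*} (E : Finset (Finset V)) : Prop :=
  ∃ c : V → Bool, ∀ X ∈ E, (∃ v ∈ X, c v = true) ∧ (∃ v ∈ X, c v = false)

/-- `m₂(H)`: the number of ordered simple pairs of edges. -/
def m2 {V : Type*} [DecidableEq V] (E : Finset (Finset V)) : ℕ :=
  ((E ×ˢ E).filter fun p => (p.1 ∩ p.2).card = 1).card

/-- From any "key" function there is an ordering compatible with it. -/
lemma exists_ordering_of_key {V : Type*} [Fintype V] [DecidableEq V] (key : V → ℕ) :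
    ∃ π : V ≃ Fin (Fintype.card V), ∀ v w, key v < key w → π v < π w := by
  classical
  let e : V ≃ Fin (Fintype.card V) := Fintype.equivFin V
  let f : Fin (Fintype.card V) → ℕ := fun i => key (e.symm i)
  let σ := Tuple.sort f
  refine ⟨e.trans σ.symm, fun v w h => ?_⟩
  by_contra hle
  push_neg at hle
  have hmono := Tuple.monotone_sort f
  have := hmono hle
  simp only [Function.comp, f] at this
  simp only [Equiv.trans_apply, σ, f, Equiv.apply_symm_apply, Equiv.symm_apply_apply] at this
  omega

theorem stmt_9 {V : Type*} [Fintype V] [DecidableEq V] (n : ℕ)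
    (E : Finset (Finset V)) (hunif : ∀ X ∈ E, X.card = n)
    (hsep : ∀ π : V ≃ Fin (Fintype.card V),
      ∀ X ∈ E, ∀ Y ∈ E, ∀ X' ∈ E, ∀ Y' ∈ E,
        (X ∩ Y).card = 1 → (X' ∩ Y').card = 1 →
        Separates π X Y → Separates π X' Y' → X = X' ∧ Y = Y')
    (X : Finset V) (hX : X ∈ E) (X' : Finset V) (hX' : X' ∈ E)
    (Y : Finset V) (hY : Y ∈ E)
    (h1 : (X ∩ Y).card = 1) (h2 : (X' ∩ Y).card = 1) (hne : X ≠ X') :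
    X ∩ Y ≠ X' ∩ Y := by
  intro heq
  obtain ⟨y, hy⟩ := Finset.card_eq_one.mp h1
  have hy' : X' ∩ Y = {y} := heq ▸ hy
  -- key: (X ∪ X') \ {y} ↦ 0, y ↦ 1, rest ↦ 2
  set key : V → ℕ := fun v => if v = y then 1 else if v ∈ X ∪ X' then 0 else 2 with hkey
  obtain ⟨π, hπ⟩ := exists_ordering_of_key key
  have hky : key y = 1 := by simp [hkey]
  have hInt : ∀ z ∈ Y, z ≠ y → key z = 2 := by
    intro z hz hzne
    have hzX : z ∉ X := fun h => hzne (Finset.mem_singleton.mp (hy ▸ Finset.mem_inter.mpr ⟨h, hz⟩))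
    have hzX' : z ∉ X' := fun h =>
      hzne (Finset.mem_singleton.mp (hy' ▸ Finset.mem_inter.mpr ⟨h, hz⟩))
    simp [hkey, hzne, hzX, hzX']
  have hsepXY : Separates π X Y := by
    refine ⟨y, hy, fun x hx hxne => ?_, fun z hz hzne => ?_⟩
    · apply hπ; rw [hky]; simp [hkey, hxne, hx]
    · apply hπ; rw [hky, hInt z hz hzne]; omega
  have hsepX'Y : Separates π X' Y := by
    refine ⟨y, hy', fun x hx hxne => ?_, fun z hz hzne => ?_⟩
    · apply hπ; rw [hky]; simp [hkey, hxne, hx]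
    · apply hπ; rw [hky, hInt z hz hzne]; omega
  exact hne (hsep π X hX Y hY X' hX' Y hY h1 h2 hsepXY hsepX'Y).1
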